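/- Let p ≥ 1, let N* be the real vector space of p×p complex skew-Hermitian matrices with Euclidean norm ‖m‖ = (Tr(m mᴴ))^{1/2} and Lebesgue measure, and let f₀(m) = e^{-‖m‖}/‖m‖^{p²/2}. There is no g ∈ L²(N*) such that for every lower triangular p×p complex matrix s with positive real diagonal entries one has (‖sᴴ m s‖/‖m‖)^{p²/2}·f₀(sᴴ m s) − f₀(m) = (‖sᴴ m s‖/‖m‖)^{p²/2}·g(sᴴ m s) − g(m) for almost every m ∈ N*. In other words, the 1-cocycle β(s) = T_a(s)f₀ − f₀ of the representation T_a of the group S is not a coboundary, so the representation of Theorem 1 is special. -/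

import Mathlib

open MeasureTheory Matrix Set
open scoped ENNReal

noncomputable section

instance (p : ℕ) : MeasurableSpace (Matrix (Fin p) (Fin p) ℂ) :=
  inferInstanceAs (MeasurableSpace ((Fin p) → (Fin p) → ℂ))

instance (p : ℕ) : BorelSpace (Matrix (Fin p) (Fin p) ℂ) :=
  inferInstanceAs (BorelSpace ((Fin p) → (Fin p) → ℂ))

/-- `N*`, the real vector space of `p×p` complex skew-Hermitian matrices (`mᴴ = -m`),
of real dimension `p²`. -/
abbrev SkewHerm (p : ℕ) : Type := skewAdjoint (Matrix (Fin p) (Fin p) ℂ)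

/-- The Euclidean (Frobenius) norm `‖m‖ = (Tr (m mᴴ))^{1/2}` on matrices. -/
def matNorm {p : ℕ} (m : Matrix (Fin p) (Fin p) ℂ) : ℝ :=
  Real.sqrt ((m * mᴴ).trace.re)

/-- The function `f₀(m) = e^{-‖m‖} / ‖m‖^{p²/2}` on `N*`. -/
def f₀ (p : ℕ) (m : SkewHerm p) : ℝ :=
  Real.exp (-matNorm (m : Matrix (Fin p) (Fin p) ℂ)) /
    matNorm (m : Matrix (Fin p) (Fin p) ℂ) ^ ((p ^ 2 : ℝ) / 2)

/-- The action `m ↦ sᴴ m s` of a matrix `s` on the space `N*` of skew-Hermitian matrices. -/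
def conjAct {p : ℕ} (s : Matrix (Fin p) (Fin p) ℂ) (m : SkewHerm p) : SkewHerm p :=
  ⟨sᴴ * (m : Matrix (Fin p) (Fin p) ℂ) * s, by
    have hm : (m : Matrix (Fin p) (Fin p) ℂ)ᴴ = -(m : Matrix (Fin p) (Fin p) ℂ) := m.2
    simp [skewAdjoint.mem_iff, Matrix.star_eq_conjTranspose, Matrix.conjTranspose_mul,
      Matrix.mul_assoc, hm]⟩

/-- The operator `T_a(s) f (m) = (‖sᴴ m s‖/‖m‖)^{p²/2} · f(sᴴ m s)` associated with the
multiplicative cocycle `a(m) = ‖m‖^{p²/2}`. -/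
def Ta (p : ℕ) (s : Matrix (Fin p) (Fin p) ℂ) (f : SkewHerm p → ℂ) : SkewHerm p → ℂ :=
  fun m =>
    (((matNorm (sᴴ * (m : Matrix (Fin p) (Fin p) ℂ) * s) /
        matNorm (m : Matrix (Fin p) (Fin p) ℂ)) ^ ((p ^ 2 : ℝ) / 2) : ℝ) : ℂ) *
      f (conjAct s m)

/-! ### Auxiliary material -/

section Aux

open Module
open scoped Pointwise

/-! #### Instances -/

instance (p : ℕ) : NormedAddCommGroup (Matrix (Fin p) (Fin p) ℂ) :=
  inferInstanceAs (NormedAddCommGroup ((Fin p) → (Fin p) → ℂ))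

instance (p : ℕ) : NormedSpace ℝ (Matrix (Fin p) (Fin p) ℂ) :=
  inferInstanceAs (NormedSpace ℝ ((Fin p) → (Fin p) → ℂ))

instance (p : ℕ) : BorelSpace (SkewHerm p) where
  measurable_eq := by
    show MeasurableSpace.comap (Subtype.val : SkewHerm p → _) _ = borel (SkewHerm p)
    have h := BorelSpace.measurable_eq (α := Matrix (Fin p) (Fin p) ℂ)
    rw [h]
    exact (borel_comap (f := (Subtype.val : SkewHerm p → Matrix (Fin p) (Fin p) ℂ))).symm

/-- The coercion of `SkewHerm p` into matrices, as an `ℝ`-linear map. -/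
def coeLMskew (p : ℕ) : SkewHerm p →ₗ[ℝ] Matrix (Fin p) (Fin p) ℂ where
  toFun := Subtype.val
  map_add' _ _ := rfl
  map_smul' _ _ := rfl

/-- The coercion of self-adjoint matrices into matrices, as an `ℝ`-linear map. -/
def coeLMself (p : ℕ) : selfAdjoint (Matrix (Fin p) (Fin p) ℂ) →ₗ[ℝ] Matrix (Fin p) (Fin p) ℂ where
  toFun := Subtype.val
  map_add' _ _ := rfl
  map_smul' _ _ := rfl

instance (p : ℕ) : FiniteDimensional ℝ (SkewHerm p) :=
  FiniteDimensional.of_injective (coeLMskew p) Subtype.val_injective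

instance (p : ℕ) : FiniteDimensional ℝ (selfAdjoint (Matrix (Fin p) (Fin p) ℂ)) :=
  FiniteDimensional.of_injective (coeLMself p) Subtype.val_injective

instance (p : ℕ) : NormedSpace ℝ (SkewHerm p) where
  norm_smul_le r x := by
    change ‖r • (x : Matrix (Fin p) (Fin p) ℂ)‖ ≤ _
    rw [norm_smul]; rfl

/-! #### The dimension of `SkewHerm p` is `p²` -/

/-- Multiplication by `i` as an `ℝ`-linear equivalence between skew-Hermitian and
Hermitian matrices. -/
def mulIEquiv (p : ℕ) : SkewHerm p ≃ₗ[ℝ] selfAdjoint (Matrix (Fin p) (Fin p) ℂ) where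
  toFun m := ⟨Complex.I • (m : Matrix (Fin p) (Fin p) ℂ), by
    have hm : star (m : Matrix (Fin p) (Fin p) ℂ) = -(m : Matrix (Fin p) (Fin p) ℂ) := m.2
    simp [selfAdjoint.mem_iff, star_smul, hm, Complex.conj_I, neg_smul, smul_neg]⟩
  invFun m := ⟨(-Complex.I) • (m : Matrix (Fin p) (Fin p) ℂ), by
    have hm : star (m : Matrix (Fin p) (Fin p) ℂ) = (m : Matrix (Fin p) (Fin p) ℂ) := m.2
    simp [skewAdjoint.mem_iff, star_smul, hm, Complex.conj_I, neg_smul, smul_neg]⟩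
  left_inv m := by
    ext1
    show (-Complex.I) • (Complex.I • (m : Matrix (Fin p) (Fin p) ℂ)) = _
    rw [smul_smul]
    simp
  right_inv m := by
    ext1
    show Complex.I • ((-Complex.I) • (m : Matrix (Fin p) (Fin p) ℂ)) = _
    rw [smul_smul]; simp
  map_add' a b := by ext1; show Complex.I • _ = _; simp [smul_add]
  map_smul' r a := by
    ext1
    show Complex.I • ((r : ℝ) • (a : Matrix (Fin p) (Fin p) ℂ)) = _
    rw [smul_comm]; rfl

/-- The Cartan decomposition `M = M₊ + M₋` of a complex matrix into Hermitian and
skew-Hermitian parts, as an `ℝ`-linear equivalence. -/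
def cartanEquiv (p : ℕ) :
    Matrix (Fin p) (Fin p) ℂ ≃ₗ[ℝ] selfAdjoint (Matrix (Fin p) (Fin p) ℂ) × SkewHerm p where
  toFun M := (⟨(2⁻¹ : ℝ) • (M + Mᴴ), by
      simp [selfAdjoint.mem_iff, Matrix.star_eq_conjTranspose, star_smul, conjTranspose_add,
        add_comm]⟩,
    ⟨(2⁻¹ : ℝ) • (M - Mᴴ), by
      simp [skewAdjoint.mem_iff, Matrix.star_eq_conjTranspose, star_smul, conjTranspose_sub,
        smul_sub, neg_sub]⟩)
  invFun x := (x.1 : Matrix (Fin p) (Fin p) ℂ) + (x.2 : Matrix (Fin p) (Fin p) ℂ)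
  left_inv M := by
    show (2⁻¹ : ℝ) • (M + Mᴴ) + (2⁻¹ : ℝ) • (M - Mᴴ) = M
    module
  right_inv x := by
    obtain ⟨⟨a, ha⟩, ⟨b, hb⟩⟩ := x
    rw [selfAdjoint.mem_iff] at ha
    rw [skewAdjoint.mem_iff] at hb
    have ha' : aᴴ = a := ha
    have hb' : bᴴ = -b := hb
    ext1 <;> [skip; skip] <;> ext1
    · show (2⁻¹ : ℝ) • ((a + b) + (a + b)ᴴ) = a
      rw [conjTranspose_add, ha', hb']
      module
    · show (2⁻¹ : ℝ) • ((a + b) - (a + b)ᴴ) = b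
      rw [conjTranspose_add, ha', hb']
      module
  map_add' M N := by
    ext1 <;> [skip; skip] <;> ext1
    · show (2⁻¹ : ℝ) • ((M + N) + (M + N)ᴴ) = (2⁻¹ : ℝ) • (M + Mᴴ) + (2⁻¹ : ℝ) • (N + Nᴴ)
      rw [conjTranspose_add]; module
    · show (2⁻¹ : ℝ) • ((M + N) - (M + N)ᴴ) = (2⁻¹ : ℝ) • (M - Mᴴ) + (2⁻¹ : ℝ) • (N - Nᴴ)
      rw [conjTranspose_add]; module
  map_smul' r M := by
    ext1 <;> [skip; skip] <;> ext1
    · show (2⁻¹ : ℝ) • ((r • M) + (r • M)ᴴ) = r • ((2⁻¹ : ℝ) • (M + Mᴴ))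
      rw [conjTranspose_smul]
      show (2⁻¹ : ℝ) • (r • M + (star r) • Mᴴ) = _
      simp only [star_trivial]
      module
    · show (2⁻¹ : ℝ) • ((r • M) - (r • M)ᴴ) = r • ((2⁻¹ : ℝ) • (M - Mᴴ))
      rw [conjTranspose_smul]
      show (2⁻¹ : ℝ) • (r • M - (star r) • Mᴴ) = _
      simp only [star_trivial]
      module

theorem finrank_skewHerm (p : ℕ) : finrank ℝ (SkewHerm p) = p ^ 2 := by
  have h1 : finrank ℝ (Matrix (Fin p) (Fin p) ℂ) = 2 * p ^ 2 := by
    have e : Matrix (Fin p) (Fin p) ℂ ≃ₗ[ℝ] (Fin p → Fin p → ℂ) := LinearEquiv.refl _ _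
    rw [e.finrank_eq]
    simp [Module.finrank_pi_fintype, Complex.finrank_real_complex]
    ring
  have h2 := (cartanEquiv p).finrank_eq
  rw [Module.finrank_prod, ← (mulIEquiv p).finrank_eq] at h2
  omega

/-! #### Basic properties of `matNorm` -/

theorem trace_mul_conjTranspose_re {p : ℕ} (M : Matrix (Fin p) (Fin p) ℂ) :
    (M * Mᴴ).trace.re = ∑ i, ∑ j, Complex.normSq (M i j) := by
  simp only [Matrix.trace, Matrix.diag, Matrix.mul_apply, Matrix.conjTranspose_apply]
  rw [Complex.re_sum]
  congr 1
  ext i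
  rw [Complex.re_sum]
  congr 1
  ext j
  rw [show star (M i j) = (starRingEnd ℂ) (M i j) from rfl, Complex.mul_conj]
  simp

theorem matNorm_eq {p : ℕ} (M : Matrix (Fin p) (Fin p) ℂ) :
    matNorm M = Real.sqrt (∑ i, ∑ j, Complex.normSq (M i j)) := by
  rw [matNorm, trace_mul_conjTranspose_re]

theorem matNorm_nonneg {p : ℕ} (M : Matrix (Fin p) (Fin p) ℂ) : 0 ≤ matNorm M :=
  Real.sqrt_nonneg _

theorem matNorm_eq_zero_iff {p : ℕ} (M : Matrix (Fin p) (Fin p) ℂ) :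
    matNorm M = 0 ↔ M = 0 := by
  rw [matNorm_eq]
  constructor
  · intro h
    have hnn : ∀ i ∈ Finset.univ, 0 ≤ ∑ j, Complex.normSq (M i j) := fun i _ =>
      Finset.sum_nonneg fun j _ => Complex.normSq_nonneg _
    have h0 : ∑ i, ∑ j, Complex.normSq (M i j) = 0 := by
      have h' := Real.sqrt_eq_zero'.1 h
      exact le_antisymm h' (Finset.sum_nonneg hnn)
    ext i j
    have hi := (Finset.sum_eq_zero_iff_of_nonneg hnn).1 h0 i (Finset.mem_univ i)
    have hj := (Finset.sum_eq_zero_iff_of_nonneg (fun j _ => Complex.normSq_nonneg _)).1 hi j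
      (Finset.mem_univ j)
    simpa [Complex.normSq_eq_zero] using hj
  · rintro rfl; simp

theorem matNorm_real_smul {p : ℕ} (t : ℝ) (M : Matrix (Fin p) (Fin p) ℂ) :
    matNorm (t • M) = |t| * matNorm M := by
  rw [matNorm_eq, matNorm_eq]
  have : ∀ i j, Complex.normSq ((t • M) i j) = t ^ 2 * Complex.normSq (M i j) := by
    intro i j
    show Complex.normSq (t • M i j) = _
    rw [Complex.real_smul, Complex.normSq_mul, Complex.normSq_ofReal]
    ring
  simp only [this, ← Finset.mul_sum]
  rw [Real.sqrt_mul (sq_nonneg t), Real.sqrt_sq_eq_abs]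

/-- A reference skew-Hermitian matrix of norm one. -/
def e₀ (p : ℕ) (hp : 1 ≤ p) : SkewHerm p :=
  ⟨Matrix.single ⟨0, hp⟩ ⟨0, hp⟩ Complex.I, by
    rw [skewAdjoint.mem_iff]
    show (Matrix.single _ _ Complex.I)ᴴ = _
    ext a b
    simp only [Matrix.conjTranspose_apply, Matrix.neg_apply]
    by_cases h1 : (⟨0, hp⟩ : Fin p) = a <;> by_cases h2 : (⟨0, hp⟩ : Fin p) = b <;>
      (first
        | (simp [Matrix.single, h1, h2, Complex.conj_I];
            split_ifs <;> simp [Complex.conj_I])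
        | simp [Matrix.single, h1, h2, Complex.conj_I])⟩

theorem matNorm_e₀ (p : ℕ) (hp : 1 ≤ p) :
    matNorm ((e₀ p hp : Matrix (Fin p) (Fin p) ℂ)) = 1 := by
  rw [matNorm_eq]
  have : ∀ i j : Fin p, Complex.normSq ((e₀ p hp : Matrix (Fin p) (Fin p) ℂ) i j)
      = if i = ⟨0, hp⟩ ∧ j = ⟨0, hp⟩ then 1 else 0 := by
    intro i j
    show Complex.normSq (Matrix.single _ _ Complex.I i j) = _
    by_cases h1 : (⟨0, hp⟩ : Fin p) = i <;> by_cases h2 : (⟨0, hp⟩ : Fin p) = j <;>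
      (first
        | (simp [Matrix.single, h1, h2, eq_comm];
            split_ifs <;> simp)
        | simp [Matrix.single, h1, h2, eq_comm])
  simp only [this, ite_and]
  rw [Finset.sum_comm]
  simp

/-- Continuity of the norm function on `SkewHerm p`. -/
theorem continuous_rS (p : ℕ) :
    Continuous (fun m : SkewHerm p => matNorm (m : Matrix (Fin p) (Fin p) ℂ)) := by
  simp only [matNorm_eq]
  apply Real.continuous_sqrt.comp
  apply continuous_finset_sum
  intro i _
  apply continuous_finset_sum
  intro j _
  exact Complex.continuous_normSq.comp <| ((continuous_apply j).comp
    ((continuous_apply i).comp continuous_subtype_val))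

/-- The action of the scalar matrix `c·1` on a matrix. -/
theorem scalar_conj (p : ℕ) (c : ℝ) (M : Matrix (Fin p) (Fin p) ℂ) :
    ((c : ℂ) • (1 : Matrix (Fin p) (Fin p) ℂ))ᴴ * M * ((c : ℂ) • 1) = (c ^ 2 : ℝ) • M := by
  rw [Matrix.conjTranspose_smul, Matrix.conjTranspose_one]
  ext i j
  simp [Matrix.smul_mul, Matrix.mul_smul, Complex.real_smul]
  ring

/-! #### The annuli `Aset p j` -/

/-- The open annulus `2⁻¹^(j+1) < ‖m‖ < 2⁻¹^j` in `SkewHerm p`. -/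
def Aset (p : ℕ) (j : ℕ) : Set (SkewHerm p) :=
  {m : SkewHerm p |
    matNorm (m : Matrix (Fin p) (Fin p) ℂ) ∈ Ioo ((2 : ℝ)⁻¹ ^ (j + 1)) ((2 : ℝ)⁻¹ ^ j)}

theorem isOpen_Aset (p j : ℕ) : IsOpen (Aset p j) :=
  (isOpen_Ioo).preimage (continuous_rS p)

theorem measurableSet_Aset (p j : ℕ) : MeasurableSet (Aset p j) :=
  (isOpen_Aset p j).measurableSet

theorem Aset_nonempty (p : ℕ) (hp : 1 ≤ p) : (Aset p 0).Nonempty := by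
  refine ⟨(3 / 4 : ℝ) • e₀ p hp, ?_⟩
  have : matNorm (((3 / 4 : ℝ) • e₀ p hp : SkewHerm p) : Matrix (Fin p) (Fin p) ℂ)
      = 3 / 4 := by
    show matNorm ((3 / 4 : ℝ) • (e₀ p hp : Matrix (Fin p) (Fin p) ℂ)) = _
    rw [matNorm_real_smul, matNorm_e₀]
    norm_num
  constructor <;> rw [this] <;> norm_num

theorem Aset_pairwise_disjoint (p : ℕ) : Pairwise (Function.onFun Disjoint (Aset p)) := by
  intro i j hij
  wlog h : i < j generalizing i j
  · exact (this hij.symm (by omega)).symm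
  rw [Function.onFun, Set.disjoint_left]
  intro m hmi hmj
  have h1 : matNorm (m : Matrix (Fin p) (Fin p) ℂ) < (2 : ℝ)⁻¹ ^ j := hmj.2
  have h2 : (2 : ℝ)⁻¹ ^ (i + 1) < matNorm (m : Matrix (Fin p) (Fin p) ℂ) := hmi.1
  have h3 : (2 : ℝ)⁻¹ ^ j ≤ (2 : ℝ)⁻¹ ^ (i + 1) :=
    pow_le_pow_of_le_one (by norm_num) (by norm_num) (by omega)
  linarith

theorem Aset_eq_smul (p : ℕ) (j : ℕ) : Aset p j = ((2 : ℝ)⁻¹ ^ j) • Aset p 0 := by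
  have hc : (0 : ℝ) < (2 : ℝ)⁻¹ ^ j := by positivity
  ext m
  rw [Set.mem_smul_set_iff_inv_smul_mem₀ hc.ne']
  have hcoe : ((((2 : ℝ)⁻¹ ^ j)⁻¹ • m : SkewHerm p) : Matrix (Fin p) (Fin p) ℂ)
      = ((2 : ℝ)⁻¹ ^ j)⁻¹ • (m : Matrix (Fin p) (Fin p) ℂ) := rfl
  simp only [Aset, Set.mem_setOf_eq, Set.mem_Ioo, hcoe, matNorm_real_smul,
    abs_of_pos (inv_pos.2 hc), zero_add, pow_one, pow_zero, inv_mul_eq_div,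
    lt_div_iff₀ hc, div_lt_iff₀ hc, one_mul, pow_succ]
  constructor
  · rintro ⟨ha, hb⟩
    refine ⟨by nlinarith, by nlinarith⟩
  · rintro ⟨ha, hb⟩
    refine ⟨by nlinarith, by nlinarith⟩

/-- A simple quadratic estimate in `ℝ≥0∞`. -/
theorem ennreal_add_sq_le (u v : ℝ≥0∞) : (u + v) ^ 2 ≤ 4 * (u ^ 2 + v ^ 2) := by
  rcases le_total u v with h | h
  · calc (u + v) ^ 2 ≤ (v + v) ^ 2 := by
          exact pow_le_pow_left' (add_le_add_left h v) 2
      _ = 4 * v ^ 2 := by ring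
      _ ≤ 4 * (u ^ 2 + v ^ 2) := by
          exact mul_le_mul_right (le_add_self) 4
  · calc (u + v) ^ 2 ≤ (u + u) ^ 2 := by
          exact pow_le_pow_left' (add_le_add_right h u) 2
      _ = 4 * u ^ 2 := by ring
      _ ≤ 4 * (u ^ 2 + v ^ 2) := by
          exact mul_le_mul_right (le_self_add) 4

end Aux

set_option maxHeartbeats 2000000

/-- The 1-cocycle `β(s) = T_a(s) f₀ − f₀` of the representation `T_a` of the group `S` of
lower triangular matrices with positive real diagonal entries is not a coboundary: there
is no `g ∈ L²(N*)` with `T_a(s) f₀ − f₀ = T_a(s) g − g` a.e. for every `s ∈ S`.  Hence the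
representation of Theorem 1 is special. -/
theorem cocycle_beta_S_not_coboundary (p : ℕ) (hp : 1 ≤ p)
    (μ : Measure (SkewHerm p)) [μ.IsAddHaarMeasure] :
    ¬ ∃ g : SkewHerm p → ℂ, MemLp g 2 μ ∧
      ∀ s : Matrix (Fin p) (Fin p) ℂ,
        (∀ i j : Fin p, i < j → s i j = 0) →
        (∀ i : Fin p, 0 < (s i i).re ∧ (s i i).im = 0) →
        ∀ᵐ (m : SkewHerm p) ∂μ,
          (((matNorm (sᴴ * (m : Matrix (Fin p) (Fin p) ℂ) * s) /
              matNorm (m : Matrix (Fin p) (Fin p) ℂ)) ^ ((p ^ 2 : ℝ) / 2) : ℝ) : ℂ) *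
              (f₀ p (conjAct s m) : ℂ) - (f₀ p m : ℂ)
            = (((matNorm (sᴴ * (m : Matrix (Fin p) (Fin p) ℂ) * s) /
                matNorm (m : Matrix (Fin p) (Fin p) ℂ)) ^ ((p ^ 2 : ℝ) / 2) : ℝ) : ℂ) *
                g (conjAct s m) - g m := by
  rintro ⟨g, hg, hco⟩
  classical
  have hd : Module.finrank ℝ (SkewHerm p) = p ^ 2 := finrank_skewHerm p
  set q : ℝ := (p ^ 2 : ℝ) / 2 with hq
  have hqpos : 0 < q := by
    have : (0:ℝ) < (p:ℝ) ^ 2 := by positivity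
    simp only [hq]
    linarith
  -- `μ` has no atoms
  have he0 : (e₀ p hp) ≠ 0 := by
    intro h
    have h1 := matNorm_e₀ p hp
    rw [h] at h1
    have h2 : matNorm ((0 : SkewHerm p) : Matrix (Fin p) (Fin p) ℂ) = 0 :=
      (matNorm_eq_zero_iff _).2 rfl
    rw [h2] at h1
    norm_num at h1
  haveI : Nontrivial (SkewHerm p) := ⟨⟨e₀ p hp, 0, he0⟩⟩
  have hzero : μ ({0} : Set (SkewHerm p)) = 0 := measure_singleton 0
  have hne : ∀ᵐ m ∂μ, m ≠ (0 : SkewHerm p) := by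
    rw [MeasureTheory.ae_iff]
    convert hzero using 2
    ext x
    simp [not_not]
  -- the squared L² integral of g
  set Ig : ℝ≥0∞ := ∫⁻ m, ((‖g m‖₊ : ℝ≥0∞)) ^ 2 ∂μ with hIgdef
  have hg2 : AEMeasurable (fun m => ((‖g m‖₊ : ℝ≥0∞)) ^ 2) μ :=
    hg.1.enorm.pow_const 2
  have hIg_top : Ig ≠ ⊤ := by
    have h1 := hg.2
    rw [eLpNorm_eq_lintegral_rpow_enorm_toReal (by norm_num) (by norm_num)] at h1
    simp only [enorm_eq_nnnorm] at h1
    have h2 : (∫⁻ m, ((‖g m‖₊ : ℝ≥0∞)) ^ ((2:ℝ≥0∞).toReal) ∂μ) ≠ ⊤ := by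
      intro hcon
      rw [hcon] at h1
      simp [ENNReal.top_rpow_of_pos] at h1
    have h3 : (∫⁻ m, ((‖g m‖₊ : ℝ≥0∞)) ^ ((2:ℝ≥0∞).toReal) ∂μ) = Ig := by
      rw [hIgdef]
      congr 1
      ext m
      rw [ENNReal.toReal_ofNat, show ((2:ℝ) = ((2:ℕ):ℝ)) by norm_num, ENNReal.rpow_natCast]
    rw [← h3]
    exact h2
  -- the explicit cocycle function
  set r : SkewHerm p → ℝ := fun m => matNorm (m : Matrix (Fin p) (Fin p) ℂ) with hrdef
  set β : ℝ → SkewHerm p → ℝ :=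
    fun t m => (Real.exp (-(t * r m)) - Real.exp (-(r m))) / (r m) ^ q with hβdef
  -- Step A : the almost-everywhere identity
  have stepA : ∀ t : ℝ, 0 < t →
      ∀ᵐ m ∂μ, ((β t m : ℝ) : ℂ) = ((t ^ q : ℝ) : ℂ) * g (t • m) - g m := by
    intro t ht
    set c : ℝ := Real.sqrt t with hc
    have hcpos : 0 < c := Real.sqrt_pos.2 ht
    have hc2 : c ^ 2 = t := Real.sq_sqrt ht.le
    set s : Matrix (Fin p) (Fin p) ℂ := (c : ℂ) • 1 with hs
    have hlow : ∀ i j : Fin p, i < j → s i j = 0 := by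
      intro i j hij
      simp only [hs, Matrix.smul_apply, Matrix.one_apply, if_neg (ne_of_lt hij)]
      simp
    have hdiag : ∀ i : Fin p, 0 < (s i i).re ∧ (s i i).im = 0 := by
      intro i
      simp only [hs, Matrix.smul_apply, Matrix.one_apply_eq]
      constructor
      · simpa using hcpos
      · simp
    filter_upwards [hco s hlow hdiag, hne] with m hm hm0
    have hr0 : r m ≠ 0 := by
      intro hcon
      exact hm0 (Subtype.val_injective ((matNorm_eq_zero_iff _).1 hcon))
    have hrpos : 0 < r m := lt_of_le_of_ne (matNorm_nonneg _) (Ne.symm hr0)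
    -- rewrite the matrix action
    have hmat : sᴴ * (m : Matrix (Fin p) (Fin p) ℂ) * s = (t : ℝ) • (m : Matrix (Fin p) (Fin p) ℂ) := by
      rw [hs, scalar_conj, hc2]
    have hcact : conjAct s m = (t : ℝ) • m := by
      apply Subtype.val_injective
      exact hmat
    have hnorm2 : matNorm (sᴴ * (m : Matrix (Fin p) (Fin p) ℂ) * s) = t * r m := by
      rw [hmat, matNorm_real_smul, abs_of_pos ht]
    have hfactor : (matNorm (sᴴ * (m : Matrix (Fin p) (Fin p) ℂ) * s) /
        matNorm (m : Matrix (Fin p) (Fin p) ℂ)) ^ ((p ^ 2 : ℝ) / 2) = t ^ q := by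
      rw [hnorm2]
      have : t * r m / r m = t := by field_simp
      rw [show matNorm (m : Matrix (Fin p) (Fin p) ℂ) = r m from rfl, this]
    have hcoesmul : (((t : ℝ) • m : SkewHerm p) : Matrix (Fin p) (Fin p) ℂ)
        = (t : ℝ) • (m : Matrix (Fin p) (Fin p) ℂ) := rfl
    have hf0 : f₀ p ((t : ℝ) • m) = Real.exp (-(t * r m)) / (t * r m) ^ q := by
      rw [f₀, hcoesmul, matNorm_real_smul, abs_of_pos ht]
    have hf0m : f₀ p m = Real.exp (-(r m)) / (r m) ^ q := rfl
    rw [hfactor, hcact, hf0, hf0m] at hm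
    -- simplify the factor multiplied by f₀
    have hkey : (t ^ q) * (Real.exp (-(t * r m)) / (t * r m) ^ q)
        = Real.exp (-(t * r m)) / (r m) ^ q := by
      rw [Real.mul_rpow ht.le hrpos.le]
      have htq : (0:ℝ) < t ^ q := Real.rpow_pos_of_pos ht q
      have hrq : (0:ℝ) < (r m) ^ q := Real.rpow_pos_of_pos hrpos q
      field_simp
    have hml : (((t ^ q : ℝ)) : ℂ) * ((Real.exp (-(t * r m)) / (t * r m) ^ q : ℝ) : ℂ)
        = (((Real.exp (-(t * r m)) / (r m) ^ q : ℝ)) : ℂ) := by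
      rw [← Complex.ofReal_mul, hkey]
    rw [hml] at hm
    have hsplit : (((Real.exp (-(t * r m)) - Real.exp (-(r m))) / (r m) ^ q : ℝ) : ℂ)
        = ((Real.exp (-(t * r m)) / (r m) ^ q : ℝ) : ℂ)
          - ((Real.exp (-(r m)) / (r m) ^ q : ℝ) : ℂ) := by
      push_cast [sub_div]
      ring
    show (((Real.exp (-(t * r m)) - Real.exp (-(r m))) / (r m) ^ q : ℝ) : ℂ) = _
    rw [hsplit]
    exact hm
  -- Step B : uniform upper bound
  have stepB : ∀ t : ℝ, 0 < t →
      (∫⁻ m, ((‖((β t m : ℝ) : ℂ)‖₊ : ℝ≥0∞)) ^ 2 ∂μ) ≤ 8 * Ig := by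
    intro t ht
    have hqmp : Measure.QuasiMeasurePreserving (fun m : SkewHerm p => t • m) μ μ :=
      Measure.quasiMeasurePreserving_smul μ ht.ne'
    have hGsc : AEMeasurable (fun m : SkewHerm p => ((‖g (t • m)‖₊ : ℝ≥0∞)) ^ 2) μ :=
      hg2.comp_quasiMeasurePreserving hqmp
    -- change of variables
    have hmapeq : Measure.map (fun m : SkewHerm p => t • m) μ
        = ENNReal.ofReal (|(t ^ Module.finrank ℝ (SkewHerm p))⁻¹|) • μ := by
      exact Measure.map_addHaar_smul μ (E := SkewHerm p) (r := t) ht.ne'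
    have hchange : (∫⁻ m, ((‖g (t • m)‖₊ : ℝ≥0∞)) ^ 2 ∂μ)
        = ENNReal.ofReal ((t ^ (p^2 : ℕ))⁻¹) * Ig := by
      have hFa : AEMeasurable (fun u : SkewHerm p => ((‖g u‖₊ : ℝ≥0∞)) ^ 2)
          (Measure.map (fun m : SkewHerm p => t • m) μ) := by
        rw [hmapeq]
        exact hg2.smul_measure _
      have h1 : (∫⁻ m, ((‖g (t • m)‖₊ : ℝ≥0∞)) ^ 2 ∂μ)
          = ∫⁻ u, ((‖g u‖₊ : ℝ≥0∞)) ^ 2 ∂(Measure.map (fun m : SkewHerm p => t • m) μ) :=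
        (lintegral_map' hFa ((measurable_const_smul t).aemeasurable)).symm
      rw [h1, hmapeq, lintegral_smul_measure, hd]
      congr 2
      rw [abs_of_pos]
      positivity
    -- pointwise bound and conclusion
    have hptwise : ∀ m : SkewHerm p,
        ((‖(((t ^ q : ℝ)) : ℂ) * g (t • m) - g m‖₊ : ℝ≥0∞)) ^ 2
          ≤ 4 * ((ENNReal.ofReal (t ^ q)) ^ 2 * ((‖g (t • m)‖₊ : ℝ≥0∞)) ^ 2
              + ((‖g m‖₊ : ℝ≥0∞)) ^ 2) := by
      intro m
      have h1 : (‖(((t ^ q : ℝ)) : ℂ) * g (t • m) - g m‖₊ : ℝ≥0∞)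
          ≤ (‖(((t ^ q : ℝ)) : ℂ) * g (t • m)‖₊ : ℝ≥0∞) + (‖g m‖₊ : ℝ≥0∞) := by
        exact_mod_cast nnnorm_sub_le _ _
      have h2 : (‖(((t ^ q : ℝ)) : ℂ) * g (t • m)‖₊ : ℝ≥0∞)
          = ENNReal.ofReal (t ^ q) * (‖g (t • m)‖₊ : ℝ≥0∞) := by
        rw [nnnorm_mul]
        push_cast
        congr 1
        rw [Complex.nnnorm_real]
        rw [← enorm_eq_nnnorm, Real.enorm_eq_ofReal_abs, abs_of_nonneg (Real.rpow_nonneg ht.le q)]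
      calc ((‖(((t ^ q : ℝ)) : ℂ) * g (t • m) - g m‖₊ : ℝ≥0∞)) ^ 2
          ≤ ((‖(((t ^ q : ℝ)) : ℂ) * g (t • m)‖₊ : ℝ≥0∞) + (‖g m‖₊ : ℝ≥0∞)) ^ 2 :=
            pow_le_pow_left' h1 2
        _ ≤ 4 * (((‖(((t ^ q : ℝ)) : ℂ) * g (t • m)‖₊ : ℝ≥0∞)) ^ 2 + ((‖g m‖₊ : ℝ≥0∞)) ^ 2) :=
            ennreal_add_sq_le _ _
        _ = 4 * ((ENNReal.ofReal (t ^ q)) ^ 2 * ((‖g (t • m)‖₊ : ℝ≥0∞)) ^ 2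
              + ((‖g m‖₊ : ℝ≥0∞)) ^ 2) := by rw [h2, mul_pow]
    have hIβT : (∫⁻ m, ((‖((β t m : ℝ) : ℂ)‖₊ : ℝ≥0∞)) ^ 2 ∂μ)
        = ∫⁻ m, ((‖(((t ^ q : ℝ)) : ℂ) * g (t • m) - g m‖₊ : ℝ≥0∞)) ^ 2 ∂μ := by
      apply lintegral_congr_ae
      filter_upwards [stepA t ht] with m hm
      rw [hm]
    rw [hIβT]
    calc (∫⁻ m, ((‖(((t ^ q : ℝ)) : ℂ) * g (t • m) - g m‖₊ : ℝ≥0∞)) ^ 2 ∂μ)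
        ≤ ∫⁻ m, 4 * ((ENNReal.ofReal (t ^ q)) ^ 2 * ((‖g (t • m)‖₊ : ℝ≥0∞)) ^ 2
            + ((‖g m‖₊ : ℝ≥0∞)) ^ 2) ∂μ := lintegral_mono hptwise
      _ = 4 * ((ENNReal.ofReal (t ^ q)) ^ 2 * (∫⁻ m, ((‖g (t • m)‖₊ : ℝ≥0∞)) ^ 2 ∂μ) + Ig) := by
          rw [lintegral_const_mul' _ _ (by norm_num),
            lintegral_add_left' (hGsc.const_mul _),
            lintegral_const_mul' _ _ (by norm_num)]
      _ = 4 * ((ENNReal.ofReal (t ^ q)) ^ 2 * (ENNReal.ofReal ((t ^ (p^2 : ℕ))⁻¹) * Ig) + Ig) := by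
          rw [hchange]
      _ = 4 * (Ig + Ig) := by
          congr 2
          rw [← mul_assoc, ← ENNReal.ofReal_pow (Real.rpow_nonneg ht.le q),
            ← ENNReal.ofReal_mul (by positivity)]
          have hexp : (t ^ q) ^ 2 * (t ^ (p^2 : ℕ))⁻¹ = 1 := by
            rw [← Real.rpow_natCast t (p^2), ← Real.rpow_two, ← Real.rpow_mul ht.le]
            rw [← Real.rpow_neg ht.le]
            rw [← Real.rpow_add ht]
            rw [show q * 2 + -((p^2 : ℕ) : ℝ) = 0 by rw [hq]; push_cast; ring]
            exact Real.rpow_zero t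
          rw [hexp]
          simp
      _ = 8 * Ig := by ring
  -- Step C : growing lower bound
  set c₀ : ℝ := Real.exp (-2⁻¹) - Real.exp (-1) with hc₀
  have hc₀pos : 0 < c₀ := by
    rw [hc₀, sub_pos]
    apply Real.exp_lt_exp.2
    norm_num
  have hA₀pos : 0 < μ (Aset p 0) :=
    (isOpen_Aset p 0).measure_pos μ (Aset_nonempty p hp)
  have stepC : ∀ k : ℕ, 1 ≤ k →
      (k : ℝ≥0∞) * (ENNReal.ofReal (c₀ ^ 2) * μ (Aset p 0))
        ≤ ∫⁻ m, ((‖((β ((4:ℝ) ^ k) m : ℝ) : ℂ)‖₊ : ℝ≥0∞)) ^ 2 ∂μ := by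
    intro k hk
    set t : ℝ := (4:ℝ) ^ k with ht4
    have ht : 0 < t := by positivity
    set F : SkewHerm p → ℝ≥0∞ := fun m => ((‖((β t m : ℝ) : ℂ)‖₊ : ℝ≥0∞)) ^ 2 with hF
    -- per-annulus bound
    have honeann : ∀ j ∈ Finset.Icc 1 k,
        ENNReal.ofReal (c₀ ^ 2) * μ (Aset p 0) ≤ ∫⁻ m in Aset p j, F m ∂μ := by
      intro j hj
      rw [Finset.mem_Icc] at hj
      set u : ℝ := (2:ℝ) ^ j with hu
      have hupos : (0:ℝ) < u := by positivity
      -- pointwise estimate on the annulus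
      have hpt : ∀ m ∈ Aset p j, ENNReal.ofReal (c₀ ^ 2 * u ^ (p^2 : ℕ)) ≤ F m := by
        intro m hm
        obtain ⟨hm1, hm2⟩ := hm
        have hrm : (2:ℝ)⁻¹ ^ (j+1) < r m := hm1
        have hrm2 : r m < (2:ℝ)⁻¹ ^ j := hm2
        have hrpos : 0 < r m := lt_trans (by positivity) hrm
        -- bounds for the exponentials
        have hrle : r m ≤ 2⁻¹ := by
          have : (2:ℝ)⁻¹ ^ j ≤ 2⁻¹ ^ 1 :=
            pow_le_pow_of_le_one (by norm_num) (by norm_num) hj.1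
          rw [pow_one] at this
          linarith
        have htr : 1 ≤ t * r m := by
          have h1 : (2:ℝ) ^ (j+1) ≤ t := by
            rw [ht4, show (4:ℝ) = 2^2 by norm_num, ← pow_mul]
            apply pow_le_pow_right₀ (by norm_num)
            omega
          have h2 : ((2:ℝ) ^ (j+1))⁻¹ ≤ r m := by
            rw [← inv_pow]
            exact hrm.le
          calc (1:ℝ) = (2:ℝ) ^ (j+1) * ((2:ℝ) ^ (j+1))⁻¹ := by
                rw [mul_inv_cancel₀ (by positivity)]
            _ ≤ t * r m := by
                apply mul_le_mul h1 h2 (by positivity) ht.le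
        have hnum : c₀ ≤ Real.exp (-(r m)) - Real.exp (-(t * r m)) := by
          rw [hc₀]
          have h1 : Real.exp (-(r m)) ≥ Real.exp (-2⁻¹) :=
            Real.exp_le_exp.2 (by linarith)
          have h2 : Real.exp (-(t * r m)) ≤ Real.exp (-1) :=
            Real.exp_le_exp.2 (by linarith)
          linarith
        have hrq : (r m) ^ q ≤ u⁻¹ ^ q := by
          apply Real.rpow_le_rpow hrpos.le _ hqpos.le
          rw [hu, ← inv_pow]
          exact hrm2.le
        have hrqpos : (0:ℝ) < (r m) ^ q := Real.rpow_pos_of_pos hrpos q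
        have huq : u⁻¹ ^ q = (u ^ q)⁻¹ := Real.inv_rpow hupos.le q
        have habs : c₀ * u ^ q ≤ |β t m| := by
          rw [hβdef]
          have hβval : (Real.exp (-(t * r m)) - Real.exp (-(r m))) / (r m) ^ q ≤ 0 := by
            apply div_nonpos_of_nonpos_of_nonneg _ hrqpos.le
            have := Real.exp_le_exp.2 (show -(t * r m) ≤ -(r m) by nlinarith)
            linarith
          rw [abs_of_nonpos hβval, ← neg_div, neg_sub]
          have h1 : c₀ ≤ Real.exp (-(r m)) - Real.exp (-(t * r m)) := hnum
          have h2 : u ^ q ≤ ((r m) ^ q)⁻¹ := by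
            rw [← Real.inv_rpow hrpos.le] at *
            apply Real.rpow_le_rpow (by positivity) _ hqpos.le
            rw [le_inv_comm₀ hupos hrpos]
            rw [hu, ← inv_pow]
            exact hrm2.le
          calc c₀ * u ^ q ≤ (Real.exp (-(r m)) - Real.exp (-(t * r m))) * ((r m) ^ q)⁻¹ := by
                apply mul_le_mul h1 h2 (by positivity) (by linarith)
            _ = (Real.exp (-(r m)) - Real.exp (-(t * r m))) / (r m) ^ q := by
                rw [div_eq_mul_inv]
        have hFval : ENNReal.ofReal ((c₀ * u ^ q) ^ 2) ≤ F m := by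
          have hFm : F m = ((‖((β t m : ℝ) : ℂ)‖₊ : ℝ≥0∞)) ^ 2 := rfl
          rw [hFm]
          have : (‖((β t m : ℝ) : ℂ)‖₊ : ℝ≥0∞) = ENNReal.ofReal |β t m| := by
            rw [show ((β t m : ℝ) : ℂ) = Complex.ofReal (β t m) from rfl]
            rw [← Real.enorm_eq_ofReal_abs, enorm_eq_nnnorm]
            congr 1
            exact_mod_cast Complex.nnnorm_real (β t m)
          rw [this, ← ENNReal.ofReal_pow (abs_nonneg _)]
          apply ENNReal.ofReal_le_ofReal
          apply pow_le_pow_left₀ (by positivity) habs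
        refine le_trans (le_of_eq ?_) hFval
        congr 1
        have huq2 : (u ^ q) ^ 2 = u ^ (p^2 : ℕ) := by
          rw [← Real.rpow_natCast u (p^2), ← Real.rpow_two, ← Real.rpow_mul hupos.le]
          congr 1
          rw [hq]; push_cast; ring
        rw [mul_pow, huq2]
      -- measure of the annulus
      have hmeasA : μ (Aset p j) = ENNReal.ofReal ((u ^ (p^2 : ℕ))⁻¹) * μ (Aset p 0) := by
        rw [Aset_eq_smul p j]
        erw [Measure.addHaar_smul μ]
        rw [hd]
        congr 2
        rw [abs_of_pos (by positivity)]
        rw [hu, ← inv_pow, inv_pow, inv_pow]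
      calc ENNReal.ofReal (c₀ ^ 2) * μ (Aset p 0)
          = ENNReal.ofReal (c₀ ^ 2 * u ^ (p^2:ℕ)) * (ENNReal.ofReal ((u ^ (p^2:ℕ))⁻¹)
              * μ (Aset p 0)) := by
            rw [← mul_assoc, ← ENNReal.ofReal_mul (by positivity)]
            congr 2
            field_simp
        _ = ENNReal.ofReal (c₀ ^ 2 * u ^ (p^2:ℕ)) * μ (Aset p j) := by rw [hmeasA]
        _ = ∫⁻ _ in Aset p j, ENNReal.ofReal (c₀ ^ 2 * u ^ (p^2:ℕ)) ∂μ := by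
            rw [setLIntegral_const]
        _ ≤ ∫⁻ m in Aset p j, F m ∂μ := by
            apply lintegral_mono_ae
            rw [ae_restrict_iff' (measurableSet_Aset p j)]
            exact ae_of_all _ hpt
    -- sum over the annuli
    calc (k : ℝ≥0∞) * (ENNReal.ofReal (c₀ ^ 2) * μ (Aset p 0))
        = ∑ j ∈ Finset.Icc 1 k, ENNReal.ofReal (c₀ ^ 2) * μ (Aset p 0) := by
          rw [Finset.sum_const, Nat.card_Icc]
          simp [nsmul_eq_mul]
      _ ≤ ∑ j ∈ Finset.Icc 1 k, ∫⁻ m in Aset p j, F m ∂μ :=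
          Finset.sum_le_sum honeann
      _ ≤ ∑' j : ℕ, ∫⁻ m in Aset p j, F m ∂μ := ENNReal.sum_le_tsum _
      _ = ∫⁻ m in ⋃ j, Aset p j, F m ∂μ :=
          (lintegral_iUnion (fun j => measurableSet_Aset p j) (Aset_pairwise_disjoint p) F).symm
      _ ≤ ∫⁻ m, F m ∂μ := lintegral_mono' Measure.restrict_le_self le_rfl
  -- Endgame
  set ε : ℝ≥0∞ := ENNReal.ofReal (c₀ ^ 2) * μ (Aset p 0) with hε
  have hεne : ε ≠ 0 := by
    rw [hε]
    apply mul_ne_zero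
    · simp only [ne_eq, ENNReal.ofReal_eq_zero, not_le]
      positivity
    · exact hA₀pos.ne'
  have hbound : ∀ k : ℕ, 1 ≤ k → (k : ℝ≥0∞) * ε ≤ 8 * Ig := fun k hk =>
    le_trans (stepC k hk) (stepB _ (by positivity))
  have h8 : (8 : ℝ≥0∞) * Ig ≠ ⊤ :=
    ENNReal.mul_ne_top (by norm_num) hIg_top
  have hdivtop : (8 : ℝ≥0∞) * Ig / ε ≠ ⊤ := by
    simp only [ne_eq, ENNReal.div_eq_top, not_or, not_and_or]
    exact ⟨Or.inr hεne, Or.inl h8⟩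
  obtain ⟨n, hn⟩ := ENNReal.exists_nat_gt hdivtop
  have hn1 : 1 ≤ n + 1 := by omega
  have := hbound (n + 1) hn1
  have hle : ((n + 1 : ℕ) : ℝ≥0∞) ≤ 8 * Ig / ε :=
    (ENNReal.le_div_iff_mul_le (Or.inl hεne) (Or.inr h8)).2 this
  have hlt : (8 : ℝ≥0∞) * Ig / ε < ((n+1 : ℕ) : ℝ≥0∞) := by
    apply lt_of_lt_of_le hn
    exact_mod_cast Nat.le_succ n
  exact absurd hle (not_le.2 hlt)

end
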